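/- Let r ≥ 2 and let p' > r be an integer with gcd(r,p') = 1. Let ζ ∈ P_r be dominant (⟨ζ, α_i⟩ a nonnegative integer for all i) with ⟨ζ, ε_1 − ε_r⟩ ≤ p' − r. Define F(σ, α) = (rp'/2)‖α‖² − p'⟨α, δ⟩ + r⟨α, σ•(ζ+δ)⟩ − ⟨δ, σ•(ζ+δ) − ζ − δ⟩. Let μ ∈ P_r and suppose w ∈ S_r and λ ∈ Q_r satisfy rμ − δ + w•δ = rλ. Then for every x ∈ ℚ, both sets T_μ(x) = {(α,σ) : α ∈ μ + Q_r, σ ∈ S_r, F(σ,α) = x} and T_0(x) = {(α,σ) : α ∈ Q_r, σ ∈ S_r, F(σ,α) = x} are finite, and sign(w) · Σ_{(α,σ) ∈ T_μ(x)} sign(σ) = Σ_{(α,σ) ∈ T_0(x)} sign(σ). (In other words, (−1)^{ℓ(w)}·χ̄^{r,r,p';μ}_{0,ζ} = χ̄^{r,r,p'}_{0,ζ}, with the sign depending only on μ.) -/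
import Mathlib


open Finset

noncomputable section

/-- Inner product `⟨u,v⟩ = Σ_i u i * v i` on `ℚ^r`. -/
def ip {r : ℕ} (u v : Fin r → ℚ) : ℚ := ∑ i, u i * v i

/-- Action of `S_r` permuting coordinates: `(w • v) i = v (w⁻¹ i)`. -/
def pact {r : ℕ} (w : Equiv.Perm (Fin r)) (v : Fin r → ℚ) : Fin r → ℚ := fun i => v (w⁻¹ i)

/-- The Weyl vector `δ`, whose (1-indexed) `i`-th coordinate is `(r+1-2i)/2`. -/
def weylδ (r : ℕ) : Fin r → ℚ := fun j => ((r : ℚ) - 1 - 2 * ((j : ℕ) : ℚ)) / 2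

/-- Membership in `V = {v : Fin r → ℚ | Σ_i v i = 0}`. -/
def memV {r : ℕ} (v : Fin r → ℚ) : Prop := ∑ i, v i = 0

/-- Membership in the root lattice `Q_r`. -/
def memQ {r : ℕ} (v : Fin r → ℚ) : Prop := memV v ∧ ∀ i, ∃ m : ℤ, v i = (m : ℚ)

/-- Membership in the weight lattice `P_r`. -/
def memP {r : ℕ} (v : Fin r → ℚ) : Prop := memV v ∧ ∀ i j, ∃ m : ℤ, v i - v j = (m : ℚ)

/-- The first fundamental weight `Λ₁ = ε₁ - (1/r)(ε₁ + ⋯ + ε_r)`. -/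
def Lam1 (r : ℕ) : Fin r → ℚ := fun j => (if (j : ℕ) = 0 then 1 else 0) - 1 / (r : ℚ)

/-- The simple roots, 0-indexed: `srootF i = ε_{i+1} - ε_{i+2}` in 1-indexed notation. -/
def srootF {r : ℕ} (i : Fin (r - 1)) : Fin r → ℚ :=
  fun j => (if (j : ℕ) = (i : ℕ) then 1 else 0) - (if (j : ℕ) = (i : ℕ) + 1 then 1 else 0)

/-- The highest root `θ = ε₁ - ε_r`. -/
def hroot (r : ℕ) : Fin r → ℚ :=
  fun j => (if (j : ℕ) = 0 then 1 else 0) - (if (j : ℕ) = r - 1 then 1 else 0)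

/-- The set `Π_{r,n}` of weights of `L_r(nΛ₁)`:
all `nΛ₁ - a₁α₁ - ⋯ - a_{r-1}α_{r-1}` with `n ≥ a₁ ≥ ⋯ ≥ a_{r-1} ≥ 0`. -/
def PiWts (r n : ℕ) : Set (Fin r → ℚ) :=
  {v | ∃ a : Fin (r - 1) → ℤ, (∀ i, 0 ≤ a i) ∧ (∀ i, a i ≤ (n : ℤ)) ∧
        (∀ i j, i ≤ j → a j ≤ a i) ∧
        v = (n : ℚ) • Lam1 r - ∑ i, (a i : ℚ) • srootF i}

/-- The exponent `F(σ,α) = (rp'/2)‖α‖² - p'⟨α,δ⟩ + r⟨α,σ•(ζ+δ)⟩ - ⟨δ, σ•(ζ+δ) - ζ - δ⟩`. -/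
def Fexp (r p' : ℕ) (ζ : Fin r → ℚ) (σ : Equiv.Perm (Fin r)) (α : Fin r → ℚ) : ℚ :=
  ((r : ℚ) * p' / 2) * ip α α - p' * ip α (weylδ r)
    + r * ip α (pact σ (ζ + weylδ r))
    - ip (weylδ r) (pact σ (ζ + weylδ r) - ζ - weylδ r)


/-! ### Auxiliary lemmas -/

lemma ip_add_left {r : ℕ} (u v x : Fin r → ℚ) : ip (u + v) x = ip u x + ip v x := by
  simp [ip, add_mul, Finset.sum_add_distrib]

lemma ip_add_right {r : ℕ} (u v x : Fin r → ℚ) : ip u (v + x) = ip u v + ip u x := by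
  simp [ip, mul_add, Finset.sum_add_distrib]

lemma ip_sub_right {r : ℕ} (u v x : Fin r → ℚ) : ip u (v - x) = ip u v - ip u x := by
  simp [ip, mul_sub, Finset.sum_sub_distrib]

lemma ip_sub_left {r : ℕ} (u v x : Fin r → ℚ) : ip (u - v) x = ip u x - ip v x := by
  simp [ip, sub_mul, Finset.sum_sub_distrib]

lemma ip_smul_left {r : ℕ} (c : ℚ) (u v : Fin r → ℚ) : ip (c • u) v = c * ip u v := by
  simp [ip, Finset.mul_sum, mul_assoc]

lemma ip_comm {r : ℕ} (u v : Fin r → ℚ) : ip u v = ip v u := by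
  simp [ip, mul_comm]

lemma pact_ip {r : ℕ} (w : Equiv.Perm (Fin r)) (u v : Fin r → ℚ) :
    ip (pact w u) (pact w v) = ip u v := by
  simp only [ip, pact]
  exact Equiv.sum_comp (w⁻¹ : Equiv.Perm (Fin r)) (fun j => u j * v j)

lemma pact_mul {r : ℕ} (w τ : Equiv.Perm (Fin r)) (v : Fin r → ℚ) :
    pact (w * τ) v = pact w (pact τ v) := by
  funext i; simp [pact, mul_inv_rev]

lemma pact_inv_pact {r : ℕ} (w : Equiv.Perm (Fin r)) (v : Fin r → ℚ) :
    pact w⁻¹ (pact w v) = v := by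
  funext i; simp [pact]

lemma pact_pact_inv {r : ℕ} (w : Equiv.Perm (Fin r)) (v : Fin r → ℚ) :
    pact w (pact w⁻¹ v) = v := by
  funext i; simp [pact]

lemma memQ_pact {r : ℕ} (w : Equiv.Perm (Fin r)) {v : Fin r → ℚ} (h : memQ v) :
    memQ (pact w v) := by
  obtain ⟨hs, hi⟩ := h
  refine ⟨?_, fun i => hi (w⁻¹ i)⟩
  show ∑ i, v (w⁻¹ i) = 0
  rw [Equiv.sum_comp (w⁻¹ : Equiv.Perm (Fin r)) v]; exact hs

lemma memQ_add {r : ℕ} {u v : Fin r → ℚ} (hu : memQ u) (hv : memQ v) : memQ (u + v) := by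
  refine ⟨?_, fun i => ?_⟩
  · show ∑ i, (u i + v i) = 0
    rw [Finset.sum_add_distrib, hu.1, hv.1, add_zero]
  · obtain ⟨m, hm⟩ := hu.2 i; obtain ⟨n, hn⟩ := hv.2 i
    exact ⟨m + n, by push_cast [Pi.add_apply, hm, hn]; ring⟩

lemma memQ_sub {r : ℕ} {u v : Fin r → ℚ} (hu : memQ u) (hv : memQ v) : memQ (u - v) := by
  refine ⟨?_, fun i => ?_⟩
  · show ∑ i, (u i - v i) = 0
    rw [Finset.sum_sub_distrib, hu.1, hv.1, sub_zero]
  · obtain ⟨m, hm⟩ := hu.2 i; obtain ⟨n, hn⟩ := hv.2 i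
    exact ⟨m - n, by push_cast [Pi.sub_apply, hm, hn]; ring⟩

lemma int_abs_le_sq (m : ℤ) : |(m:ℚ)| ≤ (m:ℚ)^2 := by
  rcases eq_or_ne m 0 with h | h
  · simp [h]
  · have h1 : (1:ℤ) ≤ |m| := Int.one_le_abs h
    have h2 : (1:ℚ) ≤ |(m:ℚ)| := by
      rw [← Int.cast_abs]; exact_mod_cast h1
    nlinarith [abs_nonneg (m:ℚ), sq_abs (m:ℚ)]

lemma finite_int_ball (r : ℕ) (M : ℚ) :
    {α : Fin r → ℚ | (∀ i, ∃ m : ℤ, α i = (m:ℚ)) ∧ ∀ i, |α i| ≤ M}.Finite := by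
  obtain ⟨N, hN⟩ := exists_nat_ge M
  apply Set.Finite.subset (Set.Finite.image (fun m : Fin r → ℤ => fun i => ((m i : ℚ)))
    (Set.Finite.pi (fun i : Fin r => Set.finite_Icc (-(N:ℤ)) (N:ℤ))))
  rintro α ⟨hint, hb⟩
  choose m hm using hint
  refine ⟨m, fun i _ => ?_, by funext i; exact (hm i).symm⟩
  have hbi := hb i
  rw [hm i] at hbi
  have h1 : |(m i : ℚ)| ≤ (N:ℚ) := hbi.trans hN
  have h2 : |m i| ≤ (N:ℤ) := by rw [← Int.cast_abs] at h1; exact_mod_cast h1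
  simpa [Set.mem_Icc] using abs_le.1 h2

lemma key_transf (r p' : ℕ) (hr : (r:ℚ) ≠ 0) (ζ μ lam : Fin r → ℚ)
    (w τ : Equiv.Perm (Fin r))
    (h : (r : ℚ) • μ - weylδ r + pact w (weylδ r) = (r : ℚ) • lam) (β : Fin r → ℚ) :
    Fexp r p' ζ (w * τ) (pact w β + (μ - lam)) = Fexp r p' ζ τ β := by
  set δ := weylδ r with hδ
  set d : Fin r → ℚ := μ - lam with hdd
  have hD : δ - pact w δ = (r:ℚ) • d := by
    funext i
    have := congrFun h i
    simp only [Pi.add_apply, Pi.sub_apply, Pi.smul_apply, smul_eq_mul, hdd] at this ⊢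
    linarith
  have hrd : ∀ u : Fin r → ℚ, ip u δ - ip u (pact w δ) = (r:ℚ) * ip u d := by
    intro u
    rw [← ip_sub_right, hD, ip_comm, ip_smul_left, ip_comm]
  set ρ := ζ + δ with hρ
  set P := pact w β with hP
  set R := pact τ ρ with hR
  set W := pact w R with hW
  have h1 : ip P δ - ip β δ = (r:ℚ) * ip P d := by
    have := hrd P
    rwa [hP, pact_ip] at this
  have h2 : ip W δ - ip R δ = (r:ℚ) * ip W d := by
    have := hrd W
    rwa [hW, pact_ip] at this
  have h3 : (r:ℚ) * ip d d = 2 * ip d δ := by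
    apply mul_left_cancel₀ hr
    have i1 := hrd d
    have i2 := hrd (pact w δ)
    have i3 := hrd δ
    rw [pact_ip] at i2
    have c1 : ip d (pact w δ) = ip (pact w δ) d := ip_comm _ _
    have c2 : ip (pact w δ) δ = ip δ (pact w δ) := ip_comm _ _
    have c3 : ip d δ = ip δ d := ip_comm _ _
    nlinarith [i1, i2, i3, c1, c2, c3]
  simp only [Fexp, ← hδ, ← hρ, pact_mul, ← hR, ← hW, ← hP, ip_add_left, ip_add_right,
    ip_sub_right, pact_ip]
  have c4 : ip d P = ip P d := ip_comm _ _
  have c5 : ip d W = ip W d := ip_comm _ _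
  have c6 : ip δ W = ip W δ := ip_comm _ _
  have c7 : ip δ R = ip R δ := ip_comm _ _
  have e1 : ip P P = ip β β := pact_ip _ _ _
  have e2 : ip P W = ip β R := pact_ip _ _ _
  linear_combination ((r:ℚ)*(p':ℚ)/2) * e1 + (r:ℚ) * e2 + (-(p':ℚ)) * h1 - h2
    + ((p':ℚ)/2) * h3 + ((r:ℚ)*(p':ℚ)/2) * c4 + (r:ℚ) * c5 - c6 + c7

lemma slice_finite (r p' : ℕ) (hr : 0 < r) (hp' : 0 < p') (ζ : Fin r → ℚ)
    (σ : Equiv.Perm (Fin r)) (x : ℚ) :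
    {α : Fin r → ℚ | memQ α ∧ Fexp r p' ζ σ α = x}.Finite := by
  set δ := weylδ r with hδ
  set c : ℚ := (r:ℚ) * p' / 2 with hc
  have hcpos : 0 < c := by
    have h1 : (0:ℚ) < r := by exact_mod_cast hr
    have h2 : (0:ℚ) < p' := by exact_mod_cast hp'
    positivity
  set v : Fin r → ℚ := fun i => -(p':ℚ) * δ i + (r:ℚ) * pact σ (ζ + δ) i with hv
  set e : ℚ := - ip δ (pact σ (ζ + δ) - ζ - δ) with he
  have hFx : ∀ α : Fin r → ℚ, Fexp r p' ζ σ α = c * ip α α + ip α v + e := by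
    intro α
    have hip : ip α v = -(p':ℚ) * ip α δ + (r:ℚ) * ip α (pact σ (ζ + δ)) := by
      simp only [ip, hv, Finset.mul_sum]
      rw [← Finset.sum_add_distrib]
      exact Finset.sum_congr rfl (fun i _ => by ring)
    rw [hip]; simp only [Fexp, ← hδ, hc, he]; ring
  set K : ℚ := ∑ i, (v i)^2 with hK
  have hKnn : 0 ≤ K := Finset.sum_nonneg (fun i _ => sq_nonneg _)
  set M : ℚ := (2*c*|x - e| + K)/c^2 with hM
  apply Set.Finite.subset (finite_int_ball r M)
  rintro α ⟨⟨hVα, hint⟩, hfeq⟩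
  refine ⟨hint, fun i => ?_⟩
  set S : ℚ := ip α α with hS
  have hSnn : 0 ≤ S := Finset.sum_nonneg (fun j _ => mul_self_nonneg _)
  have habs2 : 2*c*|ip α v| ≤ c^2 * S + K := by
    have hb : |ip α v| ≤ ∑ j, |α j * v j| := Finset.abs_sum_le_sum_abs _ _
    have hb2 : ∀ j : Fin r, 2*c*|α j * v j| ≤ c^2 * (α j * α j) + (v j)^2 := by
      intro j
      have := abs_mul (α j) (v j)
      nlinarith [sq_nonneg (c * |α j| - |v j|), abs_nonneg (α j), abs_nonneg (v j),
        sq_abs (α j), sq_abs (v j)]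
    calc 2*c*|ip α v| ≤ 2*c*∑ j, |α j * v j| := by nlinarith
      _ ≤ ∑ j, (c^2 * (α j * α j) + (v j)^2) := by
          rw [Finset.mul_sum]
          exact Finset.sum_le_sum (fun j _ => hb2 j)
      _ = c^2 * S + K := by rw [Finset.sum_add_distrib, ← Finset.mul_sum]; rfl
  have heq : c * S + ip α v + e = x := by rw [← hFx]; exact hfeq
  have hSM : S ≤ M := by
    rw [hM, le_div_iff₀ (by positivity)]
    have h5 : c * S = (x - e) - ip α v := by linarith
    have h5b : 2*c*(c*S) = 2*c*(x - e) - 2*c*(ip α v) := by linear_combination 2*c*h5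
    nlinarith [le_abs_self (x - e), neg_abs_le (ip α v), habs2, h5b, hcpos]
  obtain ⟨m, hm⟩ := hint i
  have h6 : α i * α i ≤ S :=
    Finset.single_le_sum (f := fun j => α j * α j) (fun j _ => mul_self_nonneg _)
      (Finset.mem_univ i)
  have h7 : |α i| ≤ α i * α i := by
    rw [hm]; have := int_abs_le_sq m; nlinarith [this]
  linarith


/-- under the same hypotheses as Statement 3, for every `x ∈ ℚ` the sets
`T_μ(x)` and `T_0(x)` are finite, and `sign(w) · Σ_{T_μ(x)} sign(σ) = Σ_{T_0(x)} sign(σ)`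
(i.e. `(-1)^{ℓ(w)} χ̄^{r,r,p';μ}_{0,ζ} = χ̄^{r,r,p'}_{0,ζ}`). -/
theorem stmt4 (r p' : ℕ) (hr : 2 ≤ r) (hrp' : r < p') (hcop : Nat.Coprime r p')
    (ζ : Fin r → ℚ) (hζP : memP ζ)
    (hdom : ∀ i : Fin (r - 1), ∃ m : ℕ, ip ζ (srootF i) = (m : ℚ))
    (hlevel : ip ζ (hroot r) ≤ (p' : ℚ) - r)
    (μ : Fin r → ℚ) (hμ : memP μ) (w : Equiv.Perm (Fin r))
    (lam : Fin r → ℚ) (hlam : memQ lam)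
    (h : (r : ℚ) • μ - weylδ r + pact w (weylδ r) = (r : ℚ) • lam)
    (x : ℚ) :
    ∃ (h1 : {ασ : (Fin r → ℚ) × Equiv.Perm (Fin r) |
              (∃ β, memQ β ∧ ασ.1 = μ + β) ∧ Fexp r p' ζ ασ.2 ασ.1 = x}.Finite)
      (h2 : {ασ : (Fin r → ℚ) × Equiv.Perm (Fin r) |
              memQ ασ.1 ∧ Fexp r p' ζ ασ.2 ασ.1 = x}.Finite),
      (Equiv.Perm.sign w : ℤ) * ∑ ασ ∈ h1.toFinset, (Equiv.Perm.sign ασ.2 : ℤ)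
        = ∑ ασ ∈ h2.toFinset, (Equiv.Perm.sign ασ.2 : ℤ) := by
  classical
  have hr0 : 0 < r := lt_of_lt_of_le (by norm_num) hr
  have hp'0 : 0 < p' := lt_trans hr0 hrp'
  have hrQ : ((r:ℚ)) ≠ 0 := by
    have : (0:ℚ) < r := by exact_mod_cast hr0
    exact ne_of_gt this
  set T0 : Set ((Fin r → ℚ) × Equiv.Perm (Fin r)) :=
    {ασ | memQ ασ.1 ∧ Fexp r p' ζ ασ.2 ασ.1 = x} with hT0def
  set Tμ : Set ((Fin r → ℚ) × Equiv.Perm (Fin r)) :=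
    {ασ | (∃ β, memQ β ∧ ασ.1 = μ + β) ∧ Fexp r p' ζ ασ.2 ασ.1 = x} with hTμdef
  have hT0fin : T0.Finite := by
    have hsub : T0 ⊆ ⋃ σ : Equiv.Perm (Fin r),
        (fun α => (α, σ)) '' {α | memQ α ∧ Fexp r p' ζ σ α = x} := by
      rintro ⟨α, σ⟩ ⟨ha, hb⟩
      exact Set.mem_iUnion.2 ⟨σ, ⟨α, ⟨ha, hb⟩, rfl⟩⟩
    exact Set.Finite.subset
      (Set.finite_iUnion fun σ => (slice_finite r p' hr0 hp'0 ζ σ x).image _) hsub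
  set f : (Fin r → ℚ) × Equiv.Perm (Fin r) → (Fin r → ℚ) × Equiv.Perm (Fin r) :=
    fun q => (pact w q.1 + (μ - lam), w * q.2) with hf
  have hfinj : Function.Injective f := by
    rintro ⟨a, s⟩ ⟨b, t⟩ hab
    simp only [hf, Prod.mk.injEq] at hab
    obtain ⟨h1, h2⟩ := hab
    have hst : s = t := mul_left_cancel h2
    have hpab : pact w a = pact w b := by
      funext i
      have := congrFun h1 i
      simp only [Pi.add_apply] at this
      linarith
    have hab2 : a = b := by
      have := congrArg (pact w⁻¹) hpab
      rwa [pact_inv_pact, pact_inv_pact] at this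
    exact Prod.ext hab2 hst
  have himg : Tμ = f '' T0 := by
    ext ⟨α, σ⟩
    constructor
    · rintro ⟨⟨γ, hγQ, hαγ⟩, hFα⟩
      have hαγ' : α = μ + γ := hαγ
      refine ⟨(pact w⁻¹ (γ + lam), w⁻¹ * σ), ⟨?_, ?_⟩, ?_⟩
      · exact memQ_pact _ (memQ_add hγQ hlam)
      · have harg : pact w (pact w⁻¹ (γ + lam)) + (μ - lam) = α := by
          rw [pact_pact_inv, hαγ']; funext i
          simp only [Pi.add_apply, Pi.sub_apply]; ring
        have := key_transf r p' hrQ ζ μ lam w (w⁻¹ * σ) h (pact w⁻¹ (γ + lam))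
        rw [harg] at this
        have hws : w * (w⁻¹ * σ) = σ := by group
        rw [hws] at this
        rw [← this]; exact hFα
      · simp only [hf]
        refine Prod.ext ?_ (by simp [mul_inv_cancel_left])
        show pact w (pact w⁻¹ (γ + lam)) + (μ - lam) = α
        rw [pact_pact_inv, hαγ']; funext i
        simp only [Pi.add_apply, Pi.sub_apply]; ring
    · rintro ⟨⟨β, τ⟩, ⟨hβQ, hFβ⟩, hq⟩
      rw [← hq]
      constructor
      · refine ⟨pact w β - lam, memQ_sub (memQ_pact _ hβQ) hlam, ?_⟩
        show pact w β + (μ - lam) = μ + (pact w β - lam)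
        funext i; simp only [Pi.add_apply, Pi.sub_apply]; ring
      · show Fexp r p' ζ (w * τ) (pact w β + (μ - lam)) = x
        rw [key_transf r p' hrQ ζ μ lam w τ h β]; exact hFβ
  have hTμfin : Tμ.Finite := himg ▸ hT0fin.image f
  refine ⟨hTμfin, hT0fin, ?_⟩
  have hfinset : hTμfin.toFinset = hT0fin.toFinset.image f := by
    ext q
    simp only [Set.Finite.mem_toFinset, Finset.mem_image, Set.Finite.mem_toFinset]
    rw [himg]
    constructor
    · rintro ⟨p, hp, hpe⟩; exact ⟨p, hp, hpe⟩
    · rintro ⟨p, hp, hpe⟩; exact ⟨p, hp, hpe⟩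
  rw [hfinset, Finset.sum_image (fun a _ b _ hab => hfinj hab)]
  have hsgn : ∀ q : (Fin r → ℚ) × Equiv.Perm (Fin r),
      ((Equiv.Perm.sign (f q).2 : ℤ)) = (Equiv.Perm.sign w : ℤ) * (Equiv.Perm.sign q.2 : ℤ) := by
    intro q
    simp [hf, map_mul]
  rw [Finset.sum_congr rfl (fun q _ => hsgn q), ← Finset.mul_sum, ← mul_assoc]
  have hww : (Equiv.Perm.sign w : ℤ) * (Equiv.Perm.sign w : ℤ) = 1 := by
    rcases Int.units_eq_one_or (Equiv.Perm.sign w) with hw | hw <;> rw [hw] <;> norm_num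
  rw [hww, one_mul]
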